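/- arXiv:2004.12369 — 3 statements merged into one kernel-verified Lean document; each statement's English description precedes it below -/
import Mathlib

section
/- Let s_U > 0, s_V > 0, m ∈ ℝ, ζ ∈ ℝ, and set σ = √(s_U² + s_V²) and λ = s_U/s_V. Then for every ε ∈ ℝ: ∫_0^∞ (1/s_V) φ((ε + u − m)/s_V) · (1/s_U)[φ((u − ζ)/s_U) + φ((u + ζ)/s_U)] du = (1/σ)[Φ(ζ/(λσ) − λ(ε − m)/σ) φ((ε − m + ζ)/σ) + Φ(−ζ/(λσ) − λ(ε − m)/σ) φ((ε − m − ζ)/σ)]. In words: the convolution of a normal density with mean m and variance s_V² and a folded normal density with location ζ and scale s_U², truncated to u ≥ 0, has the stated closed form; this is the conditional density of the composite error term ε = V − U given the control functions in the normal–folded-normal stochastic frontier model. -/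
open MeasureTheory Set Real

/-- The standard normal density. -/
noncomputable def stdNormalPDF (x : ℝ) : ℝ :=
  (Real.sqrt (2 * Real.pi))⁻¹ * Real.exp (-x ^ 2 / 2)

/-- The standard normal cumulative distribution function. -/
noncomputable def stdNormalCDF (x : ℝ) : ℝ :=
  ∫ t in Set.Iio x, stdNormalPDF t

lemma stdNormalPDF_neg (x : ℝ) : stdNormalPDF (-x) = stdNormalPDF x := by
  simp [stdNormalPDF]

lemma gauss_integrable (s μ : ℝ) (hs : 0 < s) :
    Integrable (fun u : ℝ => stdNormalPDF ((u - μ) / s)) := by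
  have h : (fun u : ℝ => stdNormalPDF ((u - μ) / s)) =
      fun u : ℝ => (Real.sqrt (2 * Real.pi))⁻¹ *
        Real.exp (-(1 / (2 * s ^ 2)) * (u - μ) ^ 2) := by
    funext u
    have : -((u - μ) / s) ^ 2 / 2 = -(1 / (2 * s ^ 2)) * (u - μ) ^ 2 := by
      rw [div_pow]; field_simp
    simp [stdNormalPDF, this]
  rw [h]
  exact (((integrable_exp_neg_mul_sq (by positivity : (0:ℝ) < 1 / (2 * s ^ 2))).comp_sub_right
    μ)).const_mul _

lemma setIntegral_Iic_add_right (c a : ℝ) (f : ℝ → ℝ) :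
    (∫ x in Iic c, f (x + a)) = ∫ x in Iic (c + a), f x := by
  rw [← integral_indicator measurableSet_Iic, ← integral_indicator measurableSet_Iic,
    ← integral_add_right_eq_self (Set.indicator (Iic (c + a)) f) a]
  congr 1
  funext x
  by_cases hx : x ≤ c
  · rw [Set.indicator_of_mem (by simpa using hx),
      Set.indicator_of_mem (by simp [hx] : x + a ∈ Iic (c + a))]
  · rw [Set.indicator_of_notMem (by simpa using hx),
      Set.indicator_of_notMem (by simp [hx] : x + a ∉ Iic (c + a))]

lemma gauss_tail (s μ : ℝ) (hs : 0 < s) :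
    (∫ u in Ioi (0 : ℝ), (1 / s) * stdNormalPDF ((u - μ) / s)) = stdNormalCDF (μ / s) := by
  have h1 : ∀ u : ℝ, (1 / s) * stdNormalPDF ((u - μ) / s) =
      (fun x => (1 / s) * stdNormalPDF (x - μ / s)) (s⁻¹ * u) := by
    intro u
    simp only
    congr 2
    field_simp
  simp only [h1]
  rw [integral_comp_mul_left_Ioi (fun x => (1 / s) * stdNormalPDF (x - μ / s)) 0
    (inv_pos.2 hs)]
  rw [mul_zero, inv_inv, smul_eq_mul, integral_const_mul, ← mul_assoc,
    mul_one_div_cancel (ne_of_gt hs), one_mul]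
  have h2 : ∀ x : ℝ, stdNormalPDF (x - μ / s) =
      (fun y => stdNormalPDF (y + μ / s)) (-x) := by
    intro x
    simp only
    rw [← stdNormalPDF_neg]
    ring_nf
  simp only [h2]
  rw [integral_comp_neg_Ioi 0 (fun y => stdNormalPDF (y + μ / s)), neg_zero,
    setIntegral_Iic_add_right 0 (μ / s) stdNormalPDF, zero_add,
    stdNormalCDF, integral_Iic_eq_integral_Iio]

lemma gauss_prod (s1 s2 μ1 μ2 u : ℝ) (h1 : 0 < s1) (h2 : 0 < s2) :
    (1 / s1) * stdNormalPDF ((u - μ1) / s1) * ((1 / s2) * stdNormalPDF ((u - μ2) / s2)) =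
      (1 / Real.sqrt (s1 ^ 2 + s2 ^ 2)) *
          stdNormalPDF ((μ1 - μ2) / Real.sqrt (s1 ^ 2 + s2 ^ 2)) *
        ((1 / (s1 * s2 / Real.sqrt (s1 ^ 2 + s2 ^ 2))) *
          stdNormalPDF ((u - (μ1 * s2 ^ 2 + μ2 * s1 ^ 2) / (s1 ^ 2 + s2 ^ 2)) /
            (s1 * s2 / Real.sqrt (s1 ^ 2 + s2 ^ 2)))) := by
  set σ := Real.sqrt (s1 ^ 2 + s2 ^ 2) with hσdef
  have hσpos : 0 < σ := Real.sqrt_pos.2 (by positivity)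
  have hσsq : σ ^ 2 = s1 ^ 2 + s2 ^ 2 := Real.sq_sqrt (by positivity)
  set s := s1 * s2 / σ with hsdef
  have hspos : 0 < s := by positivity
  set ν := (μ1 * s2 ^ 2 + μ2 * s1 ^ 2) / (s1 ^ 2 + s2 ^ 2) with hνdef
  have hconst : 1 / s1 * (1 / s2) = 1 / σ * (1 / s) := by
    rw [hsdef]; field_simp
  have hexpo : -((u - μ1) / s1) ^ 2 / 2 + -((u - μ2) / s2) ^ 2 / 2 =
      -((μ1 - μ2) / σ) ^ 2 / 2 + -((u - ν) / s) ^ 2 / 2 := by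
    have hssq : s ^ 2 = s1 ^ 2 * s2 ^ 2 / (s1 ^ 2 + s2 ^ 2) := by
      rw [hsdef, div_pow, hσsq]; ring
    rw [div_pow (u - μ1), div_pow (u - μ2), div_pow (μ1 - μ2), div_pow (u - ν), hσsq, hssq,
      hνdef]
    have hne : s1 ^ 2 + s2 ^ 2 ≠ 0 := by positivity
    field_simp
    ring
  calc (1 / s1) * stdNormalPDF ((u - μ1) / s1) * ((1 / s2) * stdNormalPDF ((u - μ2) / s2))
      = 1 / s1 * (1 / s2) * ((Real.sqrt (2 * Real.pi))⁻¹ * (Real.sqrt (2 * Real.pi))⁻¹) *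
        Real.exp (-((u - μ1) / s1) ^ 2 / 2 + -((u - μ2) / s2) ^ 2 / 2) := by
        rw [Real.exp_add]; simp only [stdNormalPDF]; ring
    _ = 1 / σ * (1 / s) * ((Real.sqrt (2 * Real.pi))⁻¹ * (Real.sqrt (2 * Real.pi))⁻¹) *
        Real.exp (-((μ1 - μ2) / σ) ^ 2 / 2 + -((u - ν) / s) ^ 2 / 2) := by
        rw [hconst, hexpo]
    _ = _ := by rw [Real.exp_add]; simp only [stdNormalPDF]; ring

lemma gauss_conv (s1 s2 μ1 μ2 : ℝ) (h1 : 0 < s1) (h2 : 0 < s2) :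
    (∫ u in Ioi (0:ℝ),
        (1 / s1) * stdNormalPDF ((u - μ1) / s1) * ((1 / s2) * stdNormalPDF ((u - μ2) / s2))) =
      (1 / Real.sqrt (s1 ^ 2 + s2 ^ 2)) *
          stdNormalPDF ((μ1 - μ2) / Real.sqrt (s1 ^ 2 + s2 ^ 2)) *
        stdNormalCDF ((μ1 * s2 ^ 2 + μ2 * s1 ^ 2) /
          (Real.sqrt (s1 ^ 2 + s2 ^ 2) * (s1 * s2))) := by
  set σ := Real.sqrt (s1 ^ 2 + s2 ^ 2) with hσdef
  have hσpos : 0 < σ := Real.sqrt_pos.2 (by positivity)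
  have hσsq : σ ^ 2 = s1 ^ 2 + s2 ^ 2 := Real.sq_sqrt (by positivity)
  set s := s1 * s2 / σ with hsdef
  have hspos : 0 < s := by positivity
  set ν := (μ1 * s2 ^ 2 + μ2 * s1 ^ 2) / (s1 ^ 2 + s2 ^ 2) with hνdef
  simp only [fun u => gauss_prod s1 s2 μ1 μ2 u h1 h2]
  rw [integral_const_mul, gauss_tail s ν hspos]
  congr 2
  rw [hνdef, hsdef, ← hσsq]
  field_simp

/-- closed form of the convolution of a normal density (mean `m`,
variance `s_V²`) and a folded normal density (location `ζ`, scale `s_U²`) truncated to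
`u ≥ 0`: the conditional density of the composite error term `ε = V − U` given the control
functions in the normal–folded-normal stochastic frontier model. -/
theorem convolution_normal_foldedNormal
    (sU sV : ℝ) (hU : 0 < sU) (hV : 0 < sV) (m ζ : ℝ)
    (σ : ℝ) (hσ : σ = Real.sqrt (sU ^ 2 + sV ^ 2))
    (lam : ℝ) (hlam : lam = sU / sV)
    (ε : ℝ) :
    (∫ u in Set.Ioi (0 : ℝ),
        (1 / sV) * stdNormalPDF ((ε + u - m) / sV) *
          ((1 / sU) * (stdNormalPDF ((u - ζ) / sU) + stdNormalPDF ((u + ζ) / sU)))) =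
      (1 / σ) *
        (stdNormalCDF (ζ / (lam * σ) - lam * (ε - m) / σ) * stdNormalPDF ((ε - m + ζ) / σ) +
          stdNormalCDF (-ζ / (lam * σ) - lam * (ε - m) / σ) * stdNormalPDF ((ε - m - ζ) / σ)) := by
  have hσpos : 0 < σ := by rw [hσ]; positivity
  have hσ' : Real.sqrt (sV ^ 2 + sU ^ 2) = σ := by rw [hσ, add_comm]
  have hint : ∀ ζ' : ℝ, IntegrableOn
      (fun u => (1 / sV) * stdNormalPDF ((u - (m - ε)) / sV) *
        ((1 / sU) * stdNormalPDF ((u - ζ') / sU))) (Ioi 0) := by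
    intro ζ'
    simp only [fun u => gauss_prod sV sU (m - ε) ζ' u hV hU]
    exact Integrable.integrableOn
      (((gauss_integrable _ _ (by positivity)).const_mul _).const_mul _)
  have hsplit : ∀ u : ℝ, (1 / sV) * stdNormalPDF ((ε + u - m) / sV) *
          ((1 / sU) * (stdNormalPDF ((u - ζ) / sU) + stdNormalPDF ((u + ζ) / sU))) =
      (1 / sV) * stdNormalPDF ((u - (m - ε)) / sV) * ((1 / sU) * stdNormalPDF ((u - ζ) / sU)) +
      (1 / sV) * stdNormalPDF ((u - (m - ε)) / sV) *
        ((1 / sU) * stdNormalPDF ((u - -ζ) / sU)) := by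
    intro u
    have e1 : (ε + u - m) / sV = (u - (m - ε)) / sV := by ring_nf
    have e2 : u + ζ = u - -ζ := by ring
    rw [e1, e2]; ring
  simp only [hsplit]
  rw [integral_add (hint ζ) (hint (-ζ)),
    gauss_conv sV sU (m - ε) ζ hV hU, gauss_conv sV sU (m - ε) (-ζ) hV hU, hσ']
  have hφ1 : (m - ε - ζ) / σ = -((ε - m + ζ) / σ) := by ring
  have hφ2 : (m - ε - -ζ) / σ = -((ε - m - ζ) / σ) := by ring
  have hc1 : ((m - ε) * sU ^ 2 + ζ * sV ^ 2) / (σ * (sV * sU)) =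
      ζ / (lam * σ) - lam * (ε - m) / σ := by
    rw [hlam]; field_simp; ring
  have hc2 : ((m - ε) * sU ^ 2 + -ζ * sV ^ 2) / (σ * (sV * sU)) =
      -ζ / (lam * σ) - lam * (ε - m) / σ := by
    rw [hlam]; field_simp; ring
  rw [hφ1, hφ2, stdNormalPDF_neg, stdNormalPDF_neg, hc1, hc2]
  ring
end

section
/- Let s_U > 0, s_V > 0, ζ ∈ ℝ, and set σ = √(s_U² + s_V²), λ = s_U/s_V, ξ = ζ/(λσ). Then ∫_ℝ (1/σ) Φ(ξ − λω/σ) φ((ω + ζ)/σ) dω = Φ(ζ/s_U) and ∫_ℝ (1/σ) Φ(−ξ − λω/σ) φ((ω − ζ)/σ) dω = Φ(−ζ/s_U). In words: the two components of the closed-form conditional density of the composite error term have total masses Φ(ζ/s_U) and Φ(−ζ/s_U) respectively, so the density is a mixture of two extended skew-normal densities with these mixing probabilities (which sum to one). -/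
open MeasureTheory

open Real Filter

lemma pdf_cont : Continuous stdNormalPDF := by
  unfold stdNormalPDF; fun_prop

lemma pdf_nonneg (x : ℝ) : 0 ≤ stdNormalPDF x := by
  unfold stdNormalPDF; positivity

lemma pdf_le_one (x : ℝ) : stdNormalPDF x ≤ 1 := by
  unfold stdNormalPDF
  have h1 : Real.exp (-x ^ 2 / 2) ≤ 1 := by
    rw [Real.exp_le_one_iff]; nlinarith [sq_nonneg x]
  have h2 : (1:ℝ) ≤ Real.sqrt (2 * Real.pi) := by
    rw [show (1:ℝ) = Real.sqrt 1 by simp]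
    exact Real.sqrt_le_sqrt (by nlinarith [Real.pi_gt_three])
  calc (Real.sqrt (2 * Real.pi))⁻¹ * Real.exp (-x ^ 2 / 2) ≤ 1 * 1 := by
        apply mul_le_mul _ h1 (Real.exp_nonneg _) zero_le_one
        rw [inv_le_one_iff₀]; right; exact h2
    _ = 1 := by ring

lemma pdf_integrable : Integrable stdNormalPDF := by
  unfold stdNormalPDF
  apply Integrable.const_mul
  have : ∀ x : ℝ, -x ^ 2 / 2 = -(1/2) * x ^ 2 := by intro x; ring
  simp_rw [this]
  exact integrable_exp_neg_mul_sq (by norm_num)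

lemma pdf_integral : ∫ x, stdNormalPDF x = 1 := by
  unfold stdNormalPDF
  rw [integral_const_mul]
  have : ∀ x : ℝ, Real.exp (-x ^ 2 / 2) = Real.exp (-(1/2) * x ^ 2) := by
    intro x; ring_nf
  simp_rw [this, integral_gaussian]
  rw [show Real.pi / (1/2) = 2 * Real.pi by ring]
  rw [inv_mul_cancel₀]
  positivity


lemma cdf_nonneg (x : ℝ) : 0 ≤ stdNormalCDF x :=
  setIntegral_nonneg measurableSet_Iio (fun t _ => pdf_nonneg t)

lemma cdf_le_one (x : ℝ) : stdNormalCDF x ≤ 1 := by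
  rw [← pdf_integral]
  exact setIntegral_le_integral pdf_integrable (Eventually.of_forall pdf_nonneg)

lemma cdf_hasDeriv (x : ℝ) : HasDerivAt stdNormalCDF (stdNormalPDF x) x := by
  have key : ∀ y : ℝ, stdNormalCDF y = stdNormalCDF 0 + ∫ t in (0:ℝ)..y, stdNormalPDF t := by
    intro y
    unfold stdNormalCDF
    rw [← integral_Iic_eq_integral_Iio, ← integral_Iic_eq_integral_Iio,
      ← intervalIntegral.integral_Iic_sub_Iic (pdf_integrable.integrableOn)
        (pdf_integrable.integrableOn)]
    ring
  have h : HasDerivAt (fun y => stdNormalCDF 0 + ∫ t in (0:ℝ)..y, stdNormalPDF t)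
      (stdNormalPDF x) x := by
    apply HasDerivAt.const_add
    exact (intervalIntegral.integral_hasStrictDerivAt_right
      (pdf_integrable.intervalIntegrable)
      (pdf_cont.stronglyMeasurableAtFilter _ _) (pdf_cont.continuousAt)).hasDerivAt
  exact h.congr_of_eventuallyEq (Eventually.of_forall key)

lemma cdf_cont : Continuous stdNormalCDF :=
  continuous_iff_continuousAt.2 fun x => (cdf_hasDeriv x).continuousAt

lemma cdf_tendsto_bot : Tendsto stdNormalCDF atBot (nhds 0) := by
  have : ∀ y : ℝ, stdNormalCDF y = ∫ t, Set.indicator (Set.Iio y) stdNormalPDF t := by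
    intro y; rw [integral_indicator measurableSet_Iio]; rfl
  have main : Tendsto (fun y => ∫ t, Set.indicator (Set.Iio y) stdNormalPDF t) atBot
      (nhds (∫ _t : ℝ, (0:ℝ))) := by
    apply tendsto_integral_filter_of_dominated_convergence stdNormalPDF
    · exact Eventually.of_forall fun y =>
        (pdf_cont.aestronglyMeasurable).indicator measurableSet_Iio
    · refine Eventually.of_forall fun y => Eventually.of_forall fun t => ?_
      rw [Real.norm_eq_abs, abs_of_nonneg (Set.indicator_nonneg (fun s _ => pdf_nonneg s) t)]
      exact Set.indicator_le_self' (fun s _ => pdf_nonneg s) t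
    · exact pdf_integrable
    · refine Eventually.of_forall fun t => ?_
      apply Tendsto.congr' (f₁ := fun _ => (0:ℝ))
      · filter_upwards [eventually_lt_atBot t] with y hy
        simp [Set.indicator_of_notMem, Set.mem_Iio, not_lt.2 hy.le]
      · exact tendsto_const_nhds
  simp only [integral_zero] at main
  exact main.congr fun y => (this y).symm


lemma sqrt_two_pi_pos : 0 < Real.sqrt (2 * Real.pi) := Real.sqrt_pos.2 (by positivity)

lemma prod_integral (a b : ℝ) :
    ∫ x, stdNormalPDF x * stdNormalPDF (a + b * x) =
      stdNormalPDF (a / Real.sqrt (1 + b ^ 2)) / Real.sqrt (1 + b ^ 2) := by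
  set c : ℝ := Real.sqrt (1 + b ^ 2) with hc
  have hc2 : c ^ 2 = 1 + b ^ 2 := Real.sq_sqrt (by positivity)
  have hcpos : 0 < c := Real.sqrt_pos.2 (by positivity)
  set d : ℝ := a * b / c ^ 2 with hd
  have h1b : (0:ℝ) < 1 + b ^ 2 := by positivity
  have hexp : ∀ x : ℝ, -x ^ 2 / 2 + -(a + b * x) ^ 2 / 2 =
      -(a / c) ^ 2 / 2 + -(c ^ 2 / 2) * (x + d) ^ 2 := by
    intro x
    rw [hd, div_pow, hc2]
    field_simp
    ring
  have key : ∀ x : ℝ, stdNormalPDF x * stdNormalPDF (a + b * x) =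
      ((Real.sqrt (2 * Real.pi))⁻¹ * ((Real.sqrt (2 * Real.pi))⁻¹ *
        Real.exp (-(a / c) ^ 2 / 2))) * Real.exp (-(c ^ 2 / 2) * (x + d) ^ 2) := by
    intro x
    unfold stdNormalPDF
    calc (Real.sqrt (2 * Real.pi))⁻¹ * Real.exp (-x ^ 2 / 2) *
          ((Real.sqrt (2 * Real.pi))⁻¹ * Real.exp (-(a + b * x) ^ 2 / 2))
        = (Real.sqrt (2 * Real.pi))⁻¹ * ((Real.sqrt (2 * Real.pi))⁻¹ *
          (Real.exp (-x ^ 2 / 2) * Real.exp (-(a + b * x) ^ 2 / 2))) := by ring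
      _ = _ := by rw [← Real.exp_add, hexp x, Real.exp_add]; ring
  simp_rw [key]
  rw [integral_const_mul]
  have shift : ∫ x : ℝ, Real.exp (-(c ^ 2 / 2) * (x + d) ^ 2) =
      ∫ x : ℝ, Real.exp (-(c ^ 2 / 2) * x ^ 2) :=
    integral_add_right_eq_self (fun x => Real.exp (-(c ^ 2 / 2) * x ^ 2)) d
  rw [shift, integral_gaussian]
  have hs : Real.sqrt (Real.pi / (c ^ 2 / 2)) = Real.sqrt (2 * Real.pi) / c := by
    rw [show Real.pi / (c ^ 2 / 2) = (2 * Real.pi) / c ^ 2 by ring,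
      Real.sqrt_div (by positivity) _, Real.sqrt_sq hcpos.le]
  rw [hs]
  unfold stdNormalPDF
  have hspos := sqrt_two_pi_pos
  field_simp


lemma key_integral (a b : ℝ) :
    ∫ x, stdNormalPDF x * stdNormalCDF (a + b * x) =
      stdNormalCDF (a / Real.sqrt (1 + b ^ 2)) := by
  set c : ℝ := Real.sqrt (1 + b ^ 2) with hc
  have hcpos : 0 < c := Real.sqrt_pos.2 (by positivity)
  set F : ℝ → ℝ := fun a => ∫ x, stdNormalPDF x * stdNormalCDF (a + b * x) with hF
  set G : ℝ → ℝ := fun a => stdNormalCDF (a / c) with hG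
  have hFint : ∀ a : ℝ, Integrable (fun x => stdNormalPDF x * stdNormalCDF (a + b * x)) := by
    intro a
    apply pdf_integrable.mono
    · exact (pdf_cont.mul (cdf_cont.comp (by fun_prop))).aestronglyMeasurable
    · refine Eventually.of_forall fun x => ?_
      rw [Real.norm_eq_abs, Real.norm_eq_abs,
        abs_of_nonneg (mul_nonneg (pdf_nonneg x) (cdf_nonneg _)),
        abs_of_nonneg (pdf_nonneg x)]
      calc stdNormalPDF x * stdNormalCDF (a + b * x) ≤ stdNormalPDF x * 1 :=
            mul_le_mul_of_nonneg_left (cdf_le_one _) (pdf_nonneg x)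
        _ = stdNormalPDF x := mul_one _
  have hFderiv : ∀ a : ℝ, HasDerivAt F (stdNormalPDF (a / c) / c) a := by
    intro a
    have main := hasDerivAt_integral_of_dominated_loc_of_deriv_le (μ := volume)
      (F := fun n x => stdNormalPDF x * stdNormalCDF (n + b * x))
      (F' := fun n x => stdNormalPDF x * stdNormalPDF (n + b * x))
      (x₀ := a) (bound := stdNormalPDF) (s := Metric.ball a 1) (Metric.ball_mem_nhds a one_pos)
      (Eventually.of_forall fun n =>
        (pdf_cont.mul (cdf_cont.comp (by fun_prop))).aestronglyMeasurable)
      (hFint a)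
      ((pdf_cont.mul (pdf_cont.comp (by fun_prop))).aestronglyMeasurable)
      (Eventually.of_forall fun x n _ => by
        rw [Real.norm_eq_abs, abs_of_nonneg (mul_nonneg (pdf_nonneg x) (pdf_nonneg _))]
        calc stdNormalPDF x * stdNormalPDF (n + b * x) ≤ stdNormalPDF x * 1 :=
              mul_le_mul_of_nonneg_left (pdf_le_one _) (pdf_nonneg x)
          _ = stdNormalPDF x := mul_one _)
      pdf_integrable
      (Eventually.of_forall fun x n _ => by
        have h1 : HasDerivAt (fun n : ℝ => n + b * x) 1 n := by
          simpa using (hasDerivAt_id n).add_const (b * x)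
        have := (cdf_hasDeriv (n + b * x)).comp n h1
        simpa using this.const_mul (stdNormalPDF x))
    have := main.2
    rwa [prod_integral a b, ← hc] at this
  have hGderiv : ∀ a : ℝ, HasDerivAt G (stdNormalPDF (a / c) / c) a := by
    intro a
    have h1 : HasDerivAt (fun a : ℝ => a / c) (1 / c) a := by
      simpa using (hasDerivAt_id a).div_const c
    have := (cdf_hasDeriv (a / c)).comp a h1
    simpa [hG, Function.comp_def, div_eq_mul_inv, mul_comm] using this
  have hconst : ∀ x y : ℝ, F x - G x = F y - G y := by
    have hdiff : Differentiable ℝ (fun x => F x - G x) :=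
      fun x => ((hFderiv x).sub (hGderiv x)).differentiableAt
    have hderiv0 : ∀ x : ℝ, deriv (fun x => F x - G x) x = 0 := by
      intro x
      have : HasDerivAt (fun x => F x - G x) 0 x := by
        have h := (hFderiv x).sub (hGderiv x)
        rwa [sub_self] at h
      exact this.deriv
    exact fun x y => is_const_of_deriv_eq_zero hdiff hderiv0 x y
  have hFbot : Tendsto F atBot (nhds 0) := by
    have main : Tendsto (fun a => ∫ x, stdNormalPDF x * stdNormalCDF (a + b * x)) atBot
        (nhds (∫ _x : ℝ, (0:ℝ))) := by
      apply tendsto_integral_filter_of_dominated_convergence stdNormalPDF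
      · exact Eventually.of_forall fun n =>
          (pdf_cont.mul (cdf_cont.comp (by fun_prop))).aestronglyMeasurable
      · refine Eventually.of_forall fun n => Eventually.of_forall fun x => ?_
        rw [Real.norm_eq_abs, abs_of_nonneg (mul_nonneg (pdf_nonneg x) (cdf_nonneg _))]
        calc stdNormalPDF x * stdNormalCDF (n + b * x) ≤ stdNormalPDF x * 1 :=
              mul_le_mul_of_nonneg_left (cdf_le_one _) (pdf_nonneg x)
          _ = stdNormalPDF x := mul_one _
      · exact pdf_integrable
      · refine Eventually.of_forall fun x => ?_
        have h1 : Tendsto (fun a : ℝ => a + b * x) atBot atBot :=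
          tendsto_atBot_add_const_right _ _ tendsto_id
        have h2 : Tendsto (fun a : ℝ => stdNormalCDF (a + b * x)) atBot (nhds 0) :=
          cdf_tendsto_bot.comp h1
        simpa using h2.const_mul (stdNormalPDF x)
    simpa using main
  have hGbot : Tendsto G atBot (nhds 0) := by
    have h1 : Tendsto (fun a : ℝ => a / c) atBot atBot :=
      tendsto_id.atBot_div_const hcpos
    exact cdf_tendsto_bot.comp h1
  have hdiffbot : Tendsto (fun a => F a - G a) atBot (nhds 0) := by
    simpa using hFbot.sub hGbot
  have hzero : F a - G a = 0 := by
    have heq : (fun x : ℝ => F x - G x) = fun _ => F a - G a := funext fun x => hconst x a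
    rw [heq] at hdiffbot
    exact tendsto_nhds_unique hdiffbot tendsto_const_nhds |>.symm ▸ rfl
  have := sub_eq_zero.mp hzero
  exact this


/-- After centering, one scaled component integrates to `Φ(A/√(1+lam²))`. -/
lemma scaled_integral (A lam σ : ℝ) (hσ : 0 < σ) :
    ∫ ω : ℝ, (1 / σ) * stdNormalCDF (A - lam * (ω / σ)) * stdNormalPDF (ω / σ) =
      stdNormalCDF (A / Real.sqrt (1 + lam ^ 2)) := by
  have hdiv := MeasureTheory.Measure.integral_comp_div
    (fun x => (1 / σ) * stdNormalCDF (A - lam * x) * stdNormalPDF x) σ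
  rw [hdiv, abs_of_pos hσ]
  have : ∀ x : ℝ, (1 / σ) * stdNormalCDF (A - lam * x) * stdNormalPDF x =
      (1 / σ) * (stdNormalPDF x * stdNormalCDF (A + (-lam) * x)) := by
    intro x; ring_nf
  simp_rw [this, integral_const_mul, key_integral A (-lam), smul_eq_mul]
  rw [show ((-lam) ^ 2 : ℝ) = lam ^ 2 by ring]
  field_simp


/-- the two components of the closed-form conditional density of the composite
error term have total masses `Φ(ζ/s_U)` and `Φ(−ζ/s_U)` respectively. -/
theorem mixing_probabilities
    (sU sV ζ : ℝ) (hU : 0 < sU) (hV : 0 < sV)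
    (σ : ℝ) (hσ : σ = Real.sqrt (sU ^ 2 + sV ^ 2))
    (lam : ℝ) (hlam : lam = sU / sV)
    (ξ : ℝ) (hξ : ξ = ζ / (lam * σ)) :
    (∫ ω : ℝ, (1 / σ) * stdNormalCDF (ξ - lam * ω / σ) * stdNormalPDF ((ω + ζ) / σ)) =
        stdNormalCDF (ζ / sU) ∧
      (∫ ω : ℝ, (1 / σ) * stdNormalCDF (-ξ - lam * ω / σ) * stdNormalPDF ((ω - ζ) / σ)) =
        stdNormalCDF (-ζ / sU) := by
  have hσpos : 0 < σ := hσ ▸ Real.sqrt_pos.2 (by positivity)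
  have hσ2 : σ ^ 2 = sU ^ 2 + sV ^ 2 := by rw [hσ]; exact Real.sq_sqrt (by positivity)
  have hlampos : 0 < lam := hlam ▸ div_pos hU hV
  have hsqrt : Real.sqrt (1 + lam ^ 2) = σ / sV := by
    rw [show (1 + lam ^ 2 : ℝ) = (σ / sV) ^ 2 by
      rw [hlam, div_pow, div_pow]; field_simp; linarith [hσ2]]
    exact Real.sqrt_sq (by positivity)
  set A : ℝ := ξ + lam * ζ / σ with hA
  have hAval : A / Real.sqrt (1 + lam ^ 2) = ζ / sU := by
    rw [hsqrt, hA, hξ, hlam]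
    field_simp
    linear_combination (-ζ) * hσ2
  constructor
  · have hshift := MeasureTheory.integral_add_right_eq_self (μ := volume)
      (fun u => (1 / σ) * stdNormalCDF (A - lam * (u / σ)) * stdNormalPDF (u / σ)) ζ
    have heq : (fun ω : ℝ => (1 / σ) * stdNormalCDF (ξ - lam * ω / σ) *
        stdNormalPDF ((ω + ζ) / σ)) =
        fun ω => (1 / σ) * stdNormalCDF (A - lam * ((ω + ζ) / σ)) * stdNormalPDF ((ω + ζ) / σ) := by
      funext ω
      congr 2
      rw [hA]
      field_simp
      ring_nf
    rw [heq]
    rw [hshift]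
    rw [scaled_integral A lam σ hσpos, hAval]
  · have hshift := MeasureTheory.integral_add_right_eq_self (μ := volume)
      (fun u => (1 / σ) * stdNormalCDF (-A - lam * (u / σ)) * stdNormalPDF (u / σ)) (-ζ)
    have heq : (fun ω : ℝ => (1 / σ) * stdNormalCDF (-ξ - lam * ω / σ) *
        stdNormalPDF ((ω - ζ) / σ)) =
        fun ω => (1 / σ) * stdNormalCDF (-A - lam * ((ω + -ζ) / σ)) *
          stdNormalPDF ((ω + -ζ) / σ) := by
      funext ω
      rw [show ω + -ζ = ω - ζ by ring]
      congr 2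
      rw [hA]
      field_simp
      ring_nf
    rw [heq]
    rw [hshift]
    rw [scaled_integral (-A) lam σ hσpos]
    rw [show -A / Real.sqrt (1 + lam ^ 2) = -(A / Real.sqrt (1 + lam ^ 2)) by ring, hAval]
    ring_nf
end

section
/- Fix d ≥ 1, a symmetric positive definite d×d real matrix C, a vector a ∈ ℝ^d, and reals σ_U > 0, σ̃_V > 0, g > 0, m ∈ ℝ. For ρ ∈ ℝ^d with ρᵀC⁻¹ρ < 1 define σ̃_U(ρ) = σ_U g √(1 − ρᵀC⁻¹ρ), ζ(ρ) = g σ_U ρᵀC⁻¹a, σ(ρ) = √(σ̃_V² + σ̃_U(ρ)²), λ(ρ) = σ̃_U(ρ)/σ̃_V, ξ(ρ) = ζ(ρ)/(λ(ρ)σ(ρ)), and for ε ∈ ℝ with ω = ε − m, f(ε; ρ) = (1/σ(ρ))[Φ(ξ(ρ) − λ(ρ)ω/σ(ρ)) φ((ω + ζ(ρ))/σ(ρ)) + Φ(−ξ(ρ) − λ(ρ)ω/σ(ρ)) φ((ω − ζ(ρ))/σ(ρ))]. Then for every such ρ and every ε ∈ ℝ, f(ε; −ρ) = f(ε; ρ).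 In particular the log-likelihood of the model is an even function of the dependence-parameter vector ρ_U, so the sign of ρ_U is not identified. -/
open Matrix MeasureTheory

/-- The closed-form conditional density of the composite error term given the control
functions in the normal–folded-normal stochastic frontier model, viewed as a function of
the dependence-parameter vector `ρ`. -/
noncomputable def densF (d : ℕ) (C : Matrix (Fin d) (Fin d) ℝ) (a : Fin d → ℝ)
    (σU σV g m : ℝ) (ρ : Fin d → ℝ) (ε : ℝ) : ℝ :=
  let sU : ℝ := σU * g * Real.sqrt (1 - ρ ⬝ᵥ (C⁻¹ *ᵥ ρ))
  let ζ : ℝ := g * σU * (ρ ⬝ᵥ (C⁻¹ *ᵥ a))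
  let σ : ℝ := Real.sqrt (σV ^ 2 + sU ^ 2)
  let lam : ℝ := sU / σV
  let ξ : ℝ := ζ / (lam * σ)
  let ω : ℝ := ε - m
  (1 / σ) * (stdNormalCDF (ξ - lam * ω / σ) * stdNormalPDF ((ω + ζ) / σ) +
    stdNormalCDF (-ξ - lam * ω / σ) * stdNormalPDF ((ω - ζ) / σ))

/-- the conditional density of the composite error term is an even function of
the dependence-parameter vector `ρ`, so the sign of `ρ_U` is not identified. -/
theorem densF_even_in_rho
    (d : ℕ) (hd : 1 ≤ d)
    (C : Matrix (Fin d) (Fin d) ℝ) (hC : C.PosDef)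
    (a : Fin d → ℝ) (σU σV g m : ℝ)
    (hσU : 0 < σU) (hσV : 0 < σV) (hg : 0 < g) :
    ∀ ρ : Fin d → ℝ, ρ ⬝ᵥ (C⁻¹ *ᵥ ρ) < 1 →
      ∀ ε : ℝ, densF d C a σU σV g m (-ρ) ε = densF d C a σU σV g m ρ ε := by
  intro ρ hρ ε
  simp only [densF, mulVec_neg, dotProduct_neg, neg_dotProduct, neg_neg, neg_mul, mul_neg,
    neg_div, sub_neg_eq_add]
  ring_nf
end
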